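/- Let 0 < m < M, let q, K, k be real numbers with K > k, K/M > k/m, and (k/m)·q ≤ (K-k)/(M-m) ≤ (K/M)·q for some q > 1. Then for all t ∈ [m, M], h(t) = t^{-q}(k + ((K-k)/(M-m))(t-m)) ≤ ((mK - Mk)/((q-1)(M-m))) · ((q-1)(K-k)/(q(mK - Mk)))^q. -/

import Mathlib

theorem furuta_lemma_upper_bound (m M K k q : ℝ) (hm : 0 < m) (hmM : m < M)
    (hKk : K > k) (hKM : K / M > k / m) (hq : 1 < q)
    (h1 : (k / m) * q ≤ (K - k) / (M - m)) (h2 : (K - k) / (M - m) ≤ (K / M) * q)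
    (t : ℝ) (ht : t ∈ Set.Icc m M) :
    t ^ (-q) * (k + (K - k) / (M - m) * (t - m)) ≤
      (m * K - M * k) / ((q - 1) * (M - m)) *
        ((q - 1) * (K - k) / (q * (m * K - M * k))) ^ q := by
  obtain ⟨htm, htM⟩ := ht
  have hM : 0 < M := hm.trans hmM
  have hMm : (0:ℝ) < M - m := by linarith
  have ht0 : 0 < t := lt_of_lt_of_le hm htm
  have hKk' : (0:ℝ) < K - k := by linarith
  have hq0 : (0:ℝ) < q - 1 := by linarith
  have hqpos : (0:ℝ) < q := by linarith
  have hD : 0 < m * K - M * k := by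
    rw [gt_iff_lt, div_lt_div_iff₀ hm hM] at hKM
    nlinarith
  set D := m * K - M * k with hDdef
  set c := (K - k) / (M - m) with hc
  have hcpos : 0 < c := div_pos hKk' hMm
  set t₁ := q * D / ((q - 1) * (K - k)) with ht₁def
  have ht₁pos : 0 < t₁ := div_pos (mul_pos hqpos hD) (mul_pos hq0 hKk')
  set A := D / ((q - 1) * (M - m)) with hAdef
  have hApos : 0 < A := div_pos hD (mul_pos hq0 hMm)
  have hct₁ : c * t₁ = q * A := by
    rw [hc, ht₁def, hAdef]; field_simp
  have hbern : 1 + q * (t / t₁ - 1) ≤ (t / t₁) ^ q := by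
    have hpos : 0 < t / t₁ := div_pos ht0 ht₁pos
    have h := one_add_mul_self_le_rpow_one_add (s := t / t₁ - 1)
      (by linarith) hq.le
    simpa using h
  have key : k + c * (t - m) ≤ A * (t / t₁) ^ q := by
    have h3 : A * (1 + q * (t / t₁ - 1)) ≤ A * (t / t₁) ^ q :=
      mul_le_mul_of_nonneg_left hbern hApos.le
    have hqt : q * A * (t / t₁) = c * t := by
      rw [← hct₁]; field_simp
    have h4 : A * (1 + q * (t / t₁ - 1)) = A + c * t - q * A := by
      linear_combination hqt
    have h5 : k + c * (t - m) = A + c * t - q * A := by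
      rw [hc, hAdef, hDdef]; field_simp; ring
    rw [h5, ← h4]; exact h3
  have hrw : (q - 1) * (K - k) / (q * D) = t₁⁻¹ := by
    rw [ht₁def]; field_simp
  rw [hrw]
  have hexp : t ^ (-q) * (t / t₁) ^ q = (t₁⁻¹ : ℝ) ^ q := by
    rw [div_eq_mul_inv, Real.mul_rpow ht0.le (inv_nonneg.mpr ht₁pos.le),
      Real.rpow_neg ht0.le, ← mul_assoc,
      inv_mul_cancel₀ (ne_of_gt (Real.rpow_pos_of_pos ht0 q)), one_mul]
  calc t ^ (-q) * (k + c * (t - m)) ≤ t ^ (-q) * (A * (t / t₁) ^ q) :=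
        mul_le_mul_of_nonneg_left key (Real.rpow_nonneg ht0.le _)
    _ = A * (t₁⁻¹ : ℝ) ^ q := by rw [mul_left_comm, hexp]
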